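/- The map F⁻¹(A,B) = (arccos((1-A²+B²)/(2B)), arccos((1+A²-B²)/(2A))) is a two-sided inverse to F(α,β) = (sin α/sin(α+β), sin β/sin(α+β)) between the open triangle T = {α,β > 0, α+β < π} and the region S = {(A,B) : A,B > 0, A+B > 1, A < 1+B, B < 1+A}. -/

import Mathlib

open Real

private lemma key_id (a b : ℝ) :
    Real.sin (a + b) ^ 2 - Real.sin a ^ 2 + Real.sin b ^ 2
      = 2 * Real.sin (a + b) * Real.sin b * Real.cos a := by
  rw [Real.sin_add]
  linear_combination (-(Real.sin b) ^ 2) * Real.sin_sq_add_cos_sq a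
    + (Real.sin a) ^ 2 * Real.sin_sq_add_cos_sq b

private lemma fwd (a b : ℝ) (ha : 0 < a) (hb : 0 < b) (hab : a + b < π) :
    (0 < Real.sin a / Real.sin (a + b) ∧ 0 < Real.sin b / Real.sin (a + b) ∧
     1 < Real.sin a / Real.sin (a + b) + Real.sin b / Real.sin (a + b) ∧
     Real.sin a / Real.sin (a + b) < 1 + Real.sin b / Real.sin (a + b) ∧
     Real.sin b / Real.sin (a + b) < 1 + Real.sin a / Real.sin (a + b)) ∧
    Real.arccos ((1 - (Real.sin a / Real.sin (a + b)) ^ 2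
        + (Real.sin b / Real.sin (a + b)) ^ 2)
        / (2 * (Real.sin b / Real.sin (a + b)))) = a ∧
    Real.arccos ((1 + (Real.sin a / Real.sin (a + b)) ^ 2
        - (Real.sin b / Real.sin (a + b)) ^ 2)
        / (2 * (Real.sin a / Real.sin (a + b)))) = b := by
  have hs : 0 < Real.sin (a + b) := Real.sin_pos_of_pos_of_lt_pi (by linarith) hab
  have hsa : 0 < Real.sin a := Real.sin_pos_of_pos_of_lt_pi ha (by linarith)
  have hsb : 0 < Real.sin b := Real.sin_pos_of_pos_of_lt_pi hb (by linarith)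
  have hca : Real.cos a < 1 := by
    have := Real.cos_lt_cos_of_nonneg_of_le_pi (le_refl 0) (by linarith) ha
    rwa [Real.cos_zero] at this
  have hcb : Real.cos b < 1 := by
    have := Real.cos_lt_cos_of_nonneg_of_le_pi (le_refl 0) (by linarith) hb
    rwa [Real.cos_zero] at this
  have hcab : -1 ≤ Real.cos (a + b) := Real.neg_one_le_cos (a + b)
  have hexp2 : Real.sin a = Real.sin (a + b) * Real.cos b - Real.cos (a + b) * Real.sin b := by
    have := Real.sin_sub (a + b) b
    rwa [add_sub_cancel_right] at this
  have hexp3 : Real.sin b = Real.sin (a + b) * Real.cos a - Real.cos (a + b) * Real.sin a := by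
    have := Real.sin_sub (a + b) a
    rwa [add_sub_cancel_left] at this
  have hca' : -1 ≤ Real.cos a := Real.neg_one_le_cos a
  have hcb' : -1 ≤ Real.cos b := Real.neg_one_le_cos b
  have hexp : Real.sin (a + b) = Real.sin a * Real.cos b + Real.cos a * Real.sin b :=
    Real.sin_add a b
  constructor
  · refine ⟨by positivity, by positivity, ?_, ?_, ?_⟩
    · rw [← add_div, lt_div_iff₀ hs]
      nlinarith
    · rw [div_lt_iff₀ hs, add_mul, div_mul_cancel₀ _ hs.ne']
      nlinarith
    · rw [div_lt_iff₀ hs, add_mul, div_mul_cancel₀ _ hs.ne']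
      nlinarith
  constructor
  · have h1 : (1 - (Real.sin a / Real.sin (a + b)) ^ 2
        + (Real.sin b / Real.sin (a + b)) ^ 2)
        / (2 * (Real.sin b / Real.sin (a + b))) = Real.cos a := by
      field_simp
      linear_combination key_id a b
    rw [h1, Real.arccos_cos ha.le (by linarith)]
  · have h2 : (1 + (Real.sin a / Real.sin (a + b)) ^ 2
        - (Real.sin b / Real.sin (a + b)) ^ 2)
        / (2 * (Real.sin a / Real.sin (a + b))) = Real.cos b := by
      field_simp
      have := key_id b a
      rw [add_comm b a] at this
      linear_combination this
    rw [h2, Real.arccos_cos hb.le (by linarith)]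

private lemma bwd (A B : ℝ) (hA : 0 < A) (hB : 0 < B) (h1 : 1 < A + B)
    (h2 : A < 1 + B) (h3 : B < 1 + A) :
    (0 < Real.arccos ((1 - A ^ 2 + B ^ 2) / (2 * B)) ∧
     0 < Real.arccos ((1 + A ^ 2 - B ^ 2) / (2 * A)) ∧
     Real.arccos ((1 - A ^ 2 + B ^ 2) / (2 * B))
       + Real.arccos ((1 + A ^ 2 - B ^ 2) / (2 * A)) < π) ∧
    Real.sin (Real.arccos ((1 - A ^ 2 + B ^ 2) / (2 * B)))
      / Real.sin (Real.arccos ((1 - A ^ 2 + B ^ 2) / (2 * B))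
        + Real.arccos ((1 + A ^ 2 - B ^ 2) / (2 * A))) = A ∧
    Real.sin (Real.arccos ((1 + A ^ 2 - B ^ 2) / (2 * A)))
      / Real.sin (Real.arccos ((1 - A ^ 2 + B ^ 2) / (2 * B))
        + Real.arccos ((1 + A ^ 2 - B ^ 2) / (2 * A))) = B := by
  set u : ℝ := (1 - A ^ 2 + B ^ 2) / (2 * B) with hu_def
  set v : ℝ := (1 + A ^ 2 - B ^ 2) / (2 * A) with hv_def
  have hu1 : u < 1 := by rw [hu_def, div_lt_one (by positivity)]; nlinarith
  have hu2 : -1 < u := by rw [hu_def, lt_div_iff₀ (by positivity)]; nlinarith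
  have hv1 : v < 1 := by rw [hv_def, div_lt_one (by positivity)]; nlinarith
  have hv2 : -1 < v := by rw [hv_def, lt_div_iff₀ (by positivity)]; nlinarith
  have hα : 0 < Real.arccos u := Real.arccos_pos.2 hu1
  have hβ : 0 < Real.arccos v := Real.arccos_pos.2 hv1
  have hαπ : Real.arccos u < π :=
    lt_of_le_of_ne (Real.arccos_le_pi u) (by rw [Ne, Real.arccos_eq_pi]; intro h; linarith)
  have hβπ : Real.arccos v < π :=
    lt_of_le_of_ne (Real.arccos_le_pi v) (by rw [Ne, Real.arccos_eq_pi]; intro h; linarith)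
  set s1 : ℝ := Real.sqrt (1 - u ^ 2) with hs1_def
  set s2 : ℝ := Real.sqrt (1 - v ^ 2) with hs2_def
  have hs1pos : 0 < s1 := Real.sqrt_pos.2 (by nlinarith)
  have hs2pos : 0 < s2 := Real.sqrt_pos.2 (by nlinarith)
  have hkey : 2 * B * s1 = 2 * A * s2 := by
    have e1 : s1 ^ 2 = 1 - u ^ 2 := Real.sq_sqrt (by nlinarith)
    have e2 : s2 ^ 2 = 1 - v ^ 2 := Real.sq_sqrt (by nlinarith)
    have hpoly : 4 * B ^ 2 * (1 - u ^ 2) = 4 * A ^ 2 * (1 - v ^ 2) := by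
      rw [hu_def, hv_def]; field_simp; ring
    have hsq : (2 * B * s1) ^ 2 = (2 * A * s2) ^ 2 := by
      linear_combination 4 * B ^ 2 * e1 - 4 * A ^ 2 * e2 + hpoly
    exact (sq_eq_sq₀ (by positivity) (by positivity)).mp hsq
  have hAv : A * v + B * u = 1 := by rw [hu_def, hv_def]; field_simp; ring
  have hsinα : Real.sin (Real.arccos u) = s1 := Real.sin_arccos u
  have hsinβ : Real.sin (Real.arccos v) = s2 := Real.sin_arccos v
  have hcosα : Real.cos (Real.arccos u) = u := Real.cos_arccos hu2.le hu1.le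
  have hcosβ : Real.cos (Real.arccos v) = v := Real.cos_arccos hv2.le hv1.le
  have hS : Real.sin (Real.arccos u + Real.arccos v) = s1 * v + u * s2 := by
    rw [Real.sin_add, hsinα, hsinβ, hcosα, hcosβ]
  have hAS : A * (s1 * v + u * s2) = s1 := by
    linear_combination s1 * hAv - (u / 2) * hkey
  have hBS : B * (s1 * v + u * s2) = s2 := by
    linear_combination s2 * hAv + (v / 2) * hkey
  have hSpos : 0 < s1 * v + u * s2 := by nlinarith
  have habπ : Real.arccos u + Real.arccos v < π := by
    by_contra h
    push_neg at h
    have h2π : Real.arccos u + Real.arccos v < 2 * π := by linarith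
    have : Real.sin (Real.arccos u + Real.arccos v) ≤ 0 := by
      rw [← Real.sin_sub_two_pi]
      exact Real.sin_nonpos_of_nonpos_of_neg_pi_le (by linarith) (by linarith)
    rw [hS] at this
    linarith
  refine ⟨⟨hα, hβ, habπ⟩, ?_, ?_⟩
  · rw [hS, hsinα, div_eq_iff hSpos.ne']
    linarith [hAS]
  · rw [hS, hsinβ, div_eq_iff hSpos.ne']
    linarith [hBS]

theorem F_inv_two_sided_inverse :
    Set.MapsTo
      (fun p : ℝ × ℝ =>
        (Real.sin p.1 / Real.sin (p.1 + p.2), Real.sin p.2 / Real.sin (p.1 + p.2)))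
      {p : ℝ × ℝ | 0 < p.1 ∧ 0 < p.2 ∧ p.1 + p.2 < π}
      {q : ℝ × ℝ | 0 < q.1 ∧ 0 < q.2 ∧ 1 < q.1 + q.2 ∧ q.1 < 1 + q.2 ∧ q.2 < 1 + q.1} ∧
    Set.MapsTo
      (fun q : ℝ × ℝ =>
        (Real.arccos ((1 - q.1 ^ 2 + q.2 ^ 2) / (2 * q.2)),
         Real.arccos ((1 + q.1 ^ 2 - q.2 ^ 2) / (2 * q.1))))
      {q : ℝ × ℝ | 0 < q.1 ∧ 0 < q.2 ∧ 1 < q.1 + q.2 ∧ q.1 < 1 + q.2 ∧ q.2 < 1 + q.1}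
      {p : ℝ × ℝ | 0 < p.1 ∧ 0 < p.2 ∧ p.1 + p.2 < π} ∧
    Set.InvOn
      (fun q : ℝ × ℝ =>
        (Real.arccos ((1 - q.1 ^ 2 + q.2 ^ 2) / (2 * q.2)),
         Real.arccos ((1 + q.1 ^ 2 - q.2 ^ 2) / (2 * q.1))))
      (fun p : ℝ × ℝ =>
        (Real.sin p.1 / Real.sin (p.1 + p.2), Real.sin p.2 / Real.sin (p.1 + p.2)))
      {p : ℝ × ℝ | 0 < p.1 ∧ 0 < p.2 ∧ p.1 + p.2 < π}
      {q : ℝ × ℝ | 0 < q.1 ∧ 0 < q.2 ∧ 1 < q.1 + q.2 ∧ q.1 < 1 + q.2 ∧ q.2 < 1 + q.1} := by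
  refine ⟨?_, ?_, ?_, ?_⟩
  · intro p hp
    obtain ⟨h1, h2, h3⟩ := hp
    exact (fwd p.1 p.2 h1 h2 h3).1
  · intro q hq
    obtain ⟨h1, h2, h3, h4, h5⟩ := hq
    exact (bwd q.1 q.2 h1 h2 h3 h4 h5).1
  · intro p hp
    obtain ⟨h1, h2, h3⟩ := hp
    obtain ⟨-, e1, e2⟩ := fwd p.1 p.2 h1 h2 h3
    exact Prod.ext e1 e2
  · intro q hq
    obtain ⟨h1, h2, h3, h4, h5⟩ := hq
    obtain ⟨-, e1, e2⟩ := bwd q.1 q.2 h1 h2 h3 h4 h5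
    exact Prod.ext e1 e2
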